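/- arXiv:2209.08915 — 2 statements merged into one kernel-verified Lean document; each statement's English description precedes it below -/
import Mathlib

section
/- Let σ > 0 and δ ∈ [0, σ²/2). Let y : ℝ → ℝ be continuous with y(s)/s → 0 as s → −∞ and (1/s)∫_s^0 y(η) dη → 0 as s → −∞, and let g : ℝ → [0,∞) be measurable with ∫_{−∞}^τ e^{δζ} g(ζ) dζ < ∞ for every τ ∈ ℝ. Then for every τ ∈ ℝ, ∫_{−∞}^0 exp( (σ²/2)ζ + 2σ ∫_ζ^0 y(η) dη − 2σ y(ζ) ) g(ζ+τ) dζ < ∞. (This is the finiteness statement (3.21) in the proof of Lemma 3.6, giving that the pullback absorbing radius is finite; in the paper y(ζ) = y(θ_ζ ω) is the stationary Ornstein–Uhlenbeck process and g(ζ) = ‖f(·,ζ)‖²_{L²(ℝ²)}.) -/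
open MeasureTheory Filter intervalIntegral

noncomputable section

/-- The finiteness statement (3.21) in the proof of Lemma 3.6: with `σ > 0`,
`δ ∈ [0, σ²/2)`, a continuous `y : ℝ → ℝ` with `y(s)/s → 0` and `(1/s)∫_s^0 y → 0` as
`s → -∞`, and `g ≥ 0` measurable with `∫_{-∞}^τ e^{δζ} g(ζ) dζ < ∞` for all `τ`, one has
`∫_{-∞}^0 exp((σ²/2)ζ + 2σ∫_ζ^0 y(η)dη - 2σ y(ζ)) g(ζ+τ) dζ < ∞` for every `τ`. -/
theorem absorbing_radius_finite (σ δ : ℝ) (hσ : 0 < σ) (hδ0 : 0 ≤ δ) (hδ : δ < σ ^ 2 / 2)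
    (y : ℝ → ℝ) (hy : Continuous y)
    (hy1 : Tendsto (fun s : ℝ => y s / s) atBot (nhds 0))
    (hy2 : Tendsto (fun s : ℝ => (1 / s) * ∫ η in s..(0:ℝ), y η) atBot (nhds 0))
    (g : ℝ → ℝ) (hgm : Measurable g) (hg0 : ∀ x, 0 ≤ g x)
    (hgint : ∀ τ : ℝ, (∫⁻ ζ in Set.Iic τ, ENNReal.ofReal (Real.exp (δ * ζ) * g ζ)) < ⊤) :
    ∀ τ : ℝ,
      (∫⁻ ζ in Set.Iic (0:ℝ),
        ENNReal.ofReal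
          (Real.exp (σ ^ 2 / 2 * ζ + 2 * σ * (∫ η in ζ..(0:ℝ), y η) - 2 * σ * y ζ)
            * g (ζ + τ))) < ⊤ := by
  intro τ
  set F : ℝ → ℝ := fun ζ => σ ^ 2 / 2 * ζ + 2 * σ * (∫ η in ζ..(0:ℝ), y η) - 2 * σ * y ζ
    with hFdef
  set h : ℝ → ℝ := fun ζ => F ζ - δ * ζ with hhdef
  -- continuity of the extra exponent
  have hInt : Continuous fun ζ : ℝ => ∫ η in ζ..(0:ℝ), y η := by
    have : ∀ ζ : ℝ, (∫ η in ζ..(0:ℝ), y η) = -(∫ η in (0:ℝ)..ζ, y η) := fun ζ =>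
      (intervalIntegral.integral_symm 0 ζ)
    rw [continuous_congr fun ζ => this ζ]
    exact (intervalIntegral.continuous_primitive (fun a b => hy.intervalIntegrable a b) 0).neg
  have hconth : Continuous h := by
    apply Continuous.sub
    · exact ((continuous_const.mul continuous_id).add (continuous_const.mul hInt)).sub
        (continuous_const.mul hy)
    · exact continuous_const.mul continuous_id
  -- h → -∞ at -∞
  have htends : Tendsto h atBot atBot := by
    have hb : Tendsto
        (fun ζ : ℝ => (σ ^ 2 / 2 - δ) + 2 * σ * ((1 / ζ) * ∫ η in ζ..(0:ℝ), y η)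
          - 2 * σ * (y ζ / ζ)) atBot (nhds (σ ^ 2 / 2 - δ)) := by
      have hc : Tendsto (fun _ : ℝ => σ ^ 2 / 2 - δ) atBot (nhds (σ ^ 2 / 2 - δ)) :=
        tendsto_const_nhds
      have := (hc.add (hy2.const_mul (2 * σ))).sub (hy1.const_mul (2 * σ))
      simpa using this
    have hmul : Tendsto
        (fun ζ : ℝ => ζ * ((σ ^ 2 / 2 - δ) + 2 * σ * ((1 / ζ) * ∫ η in ζ..(0:ℝ), y η)
          - 2 * σ * (y ζ / ζ))) atBot atBot :=
      tendsto_id.atBot_mul_pos (by linarith) hb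
    refine hmul.congr' ?_
    filter_upwards [eventually_lt_atBot (0:ℝ)] with ζ hζ
    have hz : ζ ≠ 0 := ne_of_lt hζ
    field_simp [hhdef, hFdef]
    ring
  -- bound on the exponent: h ζ ≤ C for all ζ ≤ 0
  obtain ⟨T, hT⟩ : ∃ T : ℝ, ∀ ζ ≤ T, h ζ ≤ 0 := by
    have := (htends.eventually (eventually_le_atBot (0:ℝ)))
    rw [eventually_atBot] at this
    exact this
  obtain ⟨C, hC⟩ : ∃ C : ℝ, ∀ ζ ∈ Set.Icc T 0, h ζ ≤ C := by
    rcases (isCompact_Icc.bddAbove_image hconth.continuousOn) with ⟨C, hC⟩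
    exact ⟨C, fun ζ hζ => hC (Set.mem_image_of_mem h hζ)⟩
  have hbound : ∀ ζ ≤ (0:ℝ), F ζ ≤ max C 0 + δ * ζ := by
    intro ζ hζ
    rcases le_or_gt ζ T with hle | hlt
    · have h2 : F ζ - δ * ζ ≤ max C 0 := (hT ζ hle).trans (le_max_right _ _)
      linarith
    · have h2 : F ζ - δ * ζ ≤ max C 0 := (hC ζ ⟨hlt.le, hζ⟩).trans (le_max_left _ _)
      linarith
  -- pointwise bound of the integrand
  have key : ∀ ζ ∈ Set.Iic (0:ℝ),
      ENNReal.ofReal (Real.exp (F ζ) * g (ζ + τ)) ≤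
        ENNReal.ofReal (Real.exp (max C 0)) *
          ENNReal.ofReal (Real.exp (δ * ζ) * g (ζ + τ)) := by
    intro ζ hζ
    rw [← ENNReal.ofReal_mul (Real.exp_nonneg _), ← mul_assoc, ← Real.exp_add]
    exact ENNReal.ofReal_le_ofReal
      (mul_le_mul_of_nonneg_right (Real.exp_le_exp.2 (hbound ζ hζ)) (hg0 _))
  calc (∫⁻ ζ in Set.Iic (0:ℝ), ENNReal.ofReal (Real.exp (F ζ) * g (ζ + τ)))
      ≤ ∫⁻ ζ in Set.Iic (0:ℝ), ENNReal.ofReal (Real.exp (max C 0)) *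
          ENNReal.ofReal (Real.exp (δ * ζ) * g (ζ + τ)) :=
        setLIntegral_mono' measurableSet_Iic key
    _ = ENNReal.ofReal (Real.exp (max C 0)) *
        ∫⁻ ζ in Set.Iic (0:ℝ), ENNReal.ofReal (Real.exp (δ * ζ) * g (ζ + τ)) := by
        rw [lintegral_const_mul' _ _ ENNReal.ofReal_ne_top]
    _ < ⊤ := by
        rw [ENNReal.mul_lt_top_iff]
        left
        constructor
        · exact ENNReal.ofReal_lt_top
        -- change of variables ζ ↦ ζ + τ
        have hmp : MeasurePreserving (fun ζ : ℝ => ζ + τ) volume volume :=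
          measurePreserving_add_right volume τ
        have hemb : MeasurableEmbedding (fun ζ : ℝ => ζ + τ) :=
          (MeasurableEquiv.addRight τ).measurableEmbedding
        have hcv := hmp.setLIntegral_comp_preimage_emb hemb
          (fun ζ => ENNReal.ofReal (Real.exp (δ * (ζ - τ)) * g ζ)) (Set.Iic τ)
        have hpre : (fun ζ : ℝ => ζ + τ) ⁻¹' Set.Iic τ = Set.Iic (0:ℝ) := by
          ext x; simp [Set.mem_Iic]
        rw [hpre] at hcv
        simp only [add_sub_cancel_right] at hcv
        rw [hcv]
        have : ∀ ζ : ℝ, ENNReal.ofReal (Real.exp (δ * (ζ - τ)) * g ζ) =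
            ENNReal.ofReal (Real.exp (-(δ * τ))) * ENNReal.ofReal (Real.exp (δ * ζ) * g ζ) := by
          intro ζ
          rw [← ENNReal.ofReal_mul (Real.exp_nonneg _), ← mul_assoc, ← Real.exp_add]
          ring_nf
        simp_rw [this]
        rw [lintegral_const_mul' _ _ ENNReal.ofReal_ne_top]
        exact ENNReal.mul_lt_top ENNReal.ofReal_lt_top (hgint τ)
end
end

section
/- Fix ν, σ > 0, m ∈ ℕ, a twice continuously differentiable compactly supported function ψ : ℝ^m → ℝ, divergence-free vector fields e₁, …, e_m ∈ C²_c(ℝ²; ℝ²), and f ∈ L²(ℝ²; ℝ²). For v ∈ L²(ℝ²; ℝ²) set Λ'(v) = Σ_{i=1}^m ∂_iψ((v,e₁),…,(v,e_m)) e_i, where (·,·) is the L² inner product. Then the three maps G₁(v) = ν (v, ΔΛ'(v)) + b(v, Λ'(v), v) + (f, Λ'(v)), G₂(v) = σ (v, Λ'(v)), and G₃(v) = σ² Σ_{i,j=1}^m ∂_{i,j}ψ((v,e₁),…,(v,e_m)) (v,e_i)(v,e_j) are well-defined real-valued functions on L²(ℝ²; ℝ²) and are continuous with respect to the L² norm.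 (This is Lemma 4.11; G₁(v) equals ⟨L(v,t), Λ'(v)⟩ for the Navier–Stokes drift L(v,t) = −νAv − B(v) + 𝒫f after integration by parts against the divergence-free test field Λ'(v).) -/
open MeasureTheory
open scoped RealInnerProductSpace

noncomputable section

abbrev E2 : Type := EuclideanSpace ℝ (Fin 2)

/-- Partial derivative of a vector field `v : ℝ² → ℝ²` in the `i`-th coordinate direction. -/
def pdv (i : Fin 2) (v : E2 → E2) : E2 → E2 :=
  fun x => fderiv ℝ v x (EuclideanSpace.single i 1)

/-- The trilinear form `b(u,v,w) = ∑_{i,j} ∫ u_i ∂v_j/∂x_i w_j dx`. -/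
def triB (u v w : E2 → E2) : ℝ :=
  ∫ x : E2, ∑ i : Fin 2, ∑ j : Fin 2, u x i * pdv i v x j * w x j

/-- `u` is divergence-free: `∑ᵢ ∂uᵢ/∂xᵢ = 0` everywhere. -/
def DivFree (u : E2 → E2) : Prop := ∀ x : E2, ∑ i : Fin 2, pdv i u x i = 0

/-- The `L²(ℝ²;ℝ²)` inner product `(v,g) = ∫ ⟨v(x), g(x)⟩ dx`. -/
def innerL2 (v g : E2 → E2) : ℝ := ∫ x : E2, ⟪v x, g x⟫

/-- First partial derivative `∂_i ψ` of `ψ : ℝ^m → ℝ`. -/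
def dpsi (m : ℕ) (ψ : (Fin m → ℝ) → ℝ) (i : Fin m) (a : Fin m → ℝ) : ℝ :=
  fderiv ℝ ψ a (Pi.single i 1)

/-- Second partial derivative `∂_{i,j} ψ` of `ψ : ℝ^m → ℝ`. -/
def d2psi (m : ℕ) (ψ : (Fin m → ℝ) → ℝ) (i j : Fin m) (a : Fin m → ℝ) : ℝ :=
  fderiv ℝ (fun b => fderiv ℝ ψ b (Pi.single i 1)) a (Pi.single j 1)

/-- `Λ'(v) = ∑ᵢ ∂_iψ((v,e₁),…,(v,e_m)) eᵢ`, the Fréchet derivative of the cylindrical test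
functional `Λ(v) = ψ((v,e₁),…,(v,e_m))`. -/
def LamP (m : ℕ) (ψ : (Fin m → ℝ) → ℝ) (e : Fin m → E2 → E2) (v : E2 → E2) : E2 → E2 :=
  fun x => ∑ i : Fin m, dpsi m ψ i (fun i' => innerL2 v (e i')) • e i x

/-- `G₁(v) = ν (v, ΔΛ'(v)) + b(v, Λ'(v), v) + (f, Λ'(v))`, i.e. `⟨L(v,t), Λ'(v)⟩`
after integration by parts against the divergence-free test field `Λ'(v)`. -/
def G1 (ν : ℝ) (m : ℕ) (ψ : (Fin m → ℝ) → ℝ) (e : Fin m → E2 → E2) (f : E2 → E2)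
    (v : E2 → E2) : ℝ :=
  ν * (∫ x : E2, ∑ j : Fin 2, v x j * ∑ i : Fin 2, pdv i (pdv i (LamP m ψ e v)) x j)
    + triB v (LamP m ψ e v) v + innerL2 f (LamP m ψ e v)

/-- `G₂(v) = σ (v, Λ'(v))`. -/
def G2 (σ : ℝ) (m : ℕ) (ψ : (Fin m → ℝ) → ℝ) (e : Fin m → E2 → E2) (v : E2 → E2) : ℝ :=
  σ * innerL2 v (LamP m ψ e v)

/-- `G₃(v) = Λ''(v)(σv)(σv) = σ² ∑_{i,j} ∂_{i,j}ψ((v,e₁),…,(v,e_m)) (v,eᵢ)(v,eⱼ)`. -/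
def G3 (σ : ℝ) (m : ℕ) (ψ : (Fin m → ℝ) → ℝ) (e : Fin m → E2 → E2) (v : E2 → E2) : ℝ :=
  σ ^ 2 * ∑ i : Fin m, ∑ j : Fin m,
    d2psi m ψ i j (fun i' => innerL2 v (e i')) * innerL2 v (e i) * innerL2 v (e j)

/-! ### Auxiliary lemmas -/

section Aux

set_option linter.unusedSectionVars false

lemma E2.abs_apply_le (y : E2) (j : Fin 2) : |y j| ≤ ‖y‖ := by
  have h : y j = ⟪y, EuclideanSpace.single j (1:ℝ)⟫ := by
    simp [PiLp.inner_apply, EuclideanSpace.single_apply]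
  rw [h]
  calc |⟪y, EuclideanSpace.single j (1:ℝ)⟫| ≤ ‖y‖ * ‖EuclideanSpace.single j (1:ℝ)‖ :=
        abs_real_inner_le_norm _ _
    _ = ‖y‖ := by rw [EuclideanSpace.norm_single]; simp

lemma contDiff_pdv {g : E2 → E2} (hg : ContDiff ℝ 2 g) (i : Fin 2) : ContDiff ℝ 1 (pdv i g) :=
  (hg.fderiv_right (m := 1) (by norm_num)).clm_apply contDiff_const

lemma continuous_pdv {g : E2 → E2} (hg : ContDiff ℝ 1 g) (i : Fin 2) : Continuous (pdv i g) :=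
  (hg.continuous_fderiv (by norm_num)).clm_apply continuous_const

lemma hcs_pdv {g : E2 → E2} (hg : HasCompactSupport g) (i : Fin 2) :
    HasCompactSupport (pdv i g) :=
  hg.fderiv_apply (𝕜 := ℝ) (EuclideanSpace.single i 1)

lemma exists_bound {g : E2 → ℝ} (hg : Continuous g) (hgc : HasCompactSupport g) :
    ∃ C : ℝ, 0 ≤ C ∧ ∀ x, |g x| ≤ C := by
  have habs : HasCompactSupport (fun x => |g x|) := hgc.comp_left (g := fun t : ℝ => |t|) abs_zero
  obtain ⟨x₀, hx₀⟩ := (hg.abs.exists_forall_ge_of_hasCompactSupport habs)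
  exact ⟨|g x₀|, abs_nonneg _, hx₀⟩

variable {H : Type*} [NormedAddCommGroup H] [InnerProductSpace ℝ H]

lemma integrable_inner2 {f g : E2 → H} (hfm : MemLp f 2 (volume : Measure E2))
    (hgm : MemLp g 2 (volume : Measure E2)) :
    Integrable (fun x => ⟪f x, g x⟫) (volume : Measure E2) := by
  have h := L2.integrable_inner (𝕜 := ℝ) (hfm.toLp f) (hgm.toLp g)
  refine h.congr ?_
  filter_upwards [hfm.coeFn_toLp, hgm.coeFn_toLp] with x h1 h2
  rw [h1, h2]

lemma integral_inner2 {f g : E2 → H} (hfm : MemLp f 2 (volume : Measure E2))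
    (hgm : MemLp g 2 (volume : Measure E2)) :
    ∫ x : E2, ⟪f x, g x⟫ = ⟪hfm.toLp f, hgm.toLp g⟫ := by
  rw [L2.inner_def]
  refine integral_congr_ae ?_
  filter_upwards [hfm.coeFn_toLp, hgm.coeFn_toLp] with x h1 h2
  rw [h1, h2]

lemma abs_integral_inner_le {f g : E2 → H} (hfm : MemLp f 2 (volume : Measure E2))
    (hgm : MemLp g 2 (volume : Measure E2)) :
    |∫ x : E2, ⟪f x, g x⟫| ≤
      (eLpNorm f 2 volume).toReal * (eLpNorm g 2 volume).toReal := by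
  rw [integral_inner2 hfm hgm]
  calc |⟪hfm.toLp f, hgm.toLp g⟫| ≤ ‖hfm.toLp f‖ * ‖hgm.toLp g‖ := abs_real_inner_le_norm _ _
    _ = _ := by rw [Lp.norm_toLp f hfm, Lp.norm_toLp g hgm]

lemma integrable_norm_mul2 {f g : E2 → H} (hfm : MemLp f 2 (volume : Measure E2))
    (hgm : MemLp g 2 (volume : Measure E2)) :
    Integrable (fun x => ‖f x‖ * ‖g x‖) (volume : Measure E2) := by
  have h := integrable_inner2 (H := ℝ) hfm.norm hgm.norm
  simpa [RCLike.inner_apply, mul_comm] using h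

lemma integral_norm_mul_le {f g : E2 → H} (hfm : MemLp f 2 (volume : Measure E2))
    (hgm : MemLp g 2 (volume : Measure E2)) :
    ∫ x : E2, ‖f x‖ * ‖g x‖ ≤
      (eLpNorm f 2 volume).toReal * (eLpNorm g 2 volume).toReal := by
  have h := abs_integral_inner_le (H := ℝ) hfm.norm hgm.norm
  rw [eLpNorm_norm, eLpNorm_norm] at h
  have heq : (∫ x : E2, ‖f x‖ * ‖g x‖) = ∫ x : E2, (⟪‖f x‖, ‖g x‖⟫ : ℝ) := by
    congr 1
    funext x; simp [RCLike.inner_apply, mul_comm]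
  rw [heq]
  exact le_trans (le_abs_self _) h

lemma aesm_coord {v : E2 → E2} (hv : AEStronglyMeasurable v (volume : Measure E2)) (j : Fin 2) :
    AEStronglyMeasurable (fun x => v x j) (volume : Measure E2) := by
  have h : (fun x => v x j) = fun x => ⟪v x, EuclideanSpace.single j (1:ℝ)⟫ := by
    funext x; simp [PiLp.inner_apply, EuclideanSpace.single_apply]
  rw [h]; exact hv.inner aestronglyMeasurable_const

/-- Integrability of `v_i · M · w_j` for `v, w ∈ L²` and `M` bounded measurable. -/
lemma integrable_tri {v w : E2 → E2} (hv : MemLp v 2 (volume : Measure E2))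
    (hw : MemLp w 2 (volume : Measure E2)) {M : E2 → ℝ} {C : ℝ}
    (hM : AEStronglyMeasurable M (volume : Measure E2)) (hC : ∀ x, |M x| ≤ C)
    (i j : Fin 2) :
    Integrable (fun x => v x i * M x * w x j) (volume : Measure E2) := by
  refine Integrable.mono' ((integrable_norm_mul2 hv hw).const_mul C) ?_ ?_
  · exact ((aesm_coord hv.1 i).mul hM).mul (aesm_coord hw.1 j)
  · filter_upwards with x
    have h0 : (0:ℝ) ≤ C := le_trans (abs_nonneg _) (hC x)
    rw [Real.norm_eq_abs, abs_mul, abs_mul]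
    calc |v x i| * |M x| * |w x j| ≤ ‖v x‖ * C * ‖w x‖ := by
          apply mul_le_mul
          · exact mul_le_mul (E2.abs_apply_le _ _) (hC x) (abs_nonneg _) (norm_nonneg _)
          · exact E2.abs_apply_le _ _
          · exact abs_nonneg _
          · positivity
      _ = C * (‖v x‖ * ‖w x‖) := by ring

lemma abs_integral_tri_le {v w : E2 → E2} (hv : MemLp v 2 (volume : Measure E2))
    (hw : MemLp w 2 (volume : Measure E2)) {M : E2 → ℝ} {C : ℝ}
    (hM : AEStronglyMeasurable M (volume : Measure E2)) (hC : ∀ x, |M x| ≤ C)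
    (i j : Fin 2) :
    |∫ x : E2, v x i * M x * w x j| ≤
      C * ((eLpNorm v 2 volume).toReal * (eLpNorm w 2 volume).toReal) := by
  have h0 : (0:ℝ) ≤ C := le_trans (abs_nonneg _) (hC 0)
  have hint := integrable_tri hv hw hM hC i j
  calc |∫ x : E2, v x i * M x * w x j| ≤ ∫ x : E2, |v x i * M x * w x j| := by
        have hni := norm_integral_le_integral_norm (μ := (volume : Measure E2))
          (fun x : E2 => v x i * M x * w x j)
        simpa only [Real.norm_eq_abs] using hni
    _ ≤ ∫ x : E2, C * (‖v x‖ * ‖w x‖) := by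
        refine integral_mono hint.abs ((integrable_norm_mul2 hv hw).const_mul C) ?_
        intro x
        show |v x i * M x * w x j| ≤ C * (‖v x‖ * ‖w x‖)
        rw [abs_mul, abs_mul]
        calc |v x i| * |M x| * |w x j| ≤ ‖v x‖ * C * ‖w x‖ := by
              apply mul_le_mul
              · exact mul_le_mul (E2.abs_apply_le _ _) (hC x) (abs_nonneg _) (norm_nonneg _)
              · exact E2.abs_apply_le _ _
              · exact abs_nonneg _
              · positivity
          _ = C * (‖v x‖ * ‖w x‖) := by ring
    _ = C * ∫ x : E2, ‖v x‖ * ‖w x‖ := integral_const_mul _ _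
    _ ≤ C * ((eLpNorm v 2 volume).toReal * (eLpNorm w 2 volume).toReal) :=
        mul_le_mul_of_nonneg_left (integral_norm_mul_le hv hw) h0

/-- Continuity on `L²` of the quadratic form `v ↦ ∫ vᵢ M vⱼ`. -/
lemma cont_quad {M : E2 → ℝ} (hM : Continuous M) (hMc : HasCompactSupport M) (i j : Fin 2) :
    Continuous (fun v : Lp E2 2 (volume : Measure E2) =>
      ∫ x : E2, (v : E2 → E2) x i * M x * (v : E2 → E2) x j) := by
  obtain ⟨C, hC0, hC⟩ := exists_bound hM hMc
  set Q : Lp E2 2 (volume : Measure E2) → ℝ :=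
    fun v => ∫ x : E2, (v : E2 → E2) x i * M x * (v : E2 → E2) x j with hQ
  rw [continuous_iff_continuousAt]
  intro w
  have key : ∀ v : Lp E2 2 (volume : Measure E2),
      ‖Q v - Q w‖ ≤ C * (‖v - w‖ * ‖v‖) + C * (‖w‖ * ‖v - w‖) := by
    intro v
    have hv := Lp.memLp v
    have hw := Lp.memLp w
    have hvw : MemLp (fun x => (v : E2 → E2) x - (w : E2 → E2) x) 2 (volume : Measure E2) :=
      hv.sub hw
    have hIvv := integrable_tri hv hv hM.aestronglyMeasurable hC i j
    have hIww := integrable_tri hw hw hM.aestronglyMeasurable hC i j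
    have hI1 := integrable_tri hvw hv hM.aestronglyMeasurable hC i j
    have hI2 := integrable_tri hw hvw hM.aestronglyMeasurable hC i j
    have hsplit : Q v - Q w =
        (∫ x : E2, ((v : E2 → E2) x - (w : E2 → E2) x) i * M x * (v : E2 → E2) x j)
        + ∫ x : E2, (w : E2 → E2) x i * M x * ((v : E2 → E2) x - (w : E2 → E2) x) j := by
      rw [hQ]
      rw [← integral_sub hIvv hIww, ← integral_add hI1 hI2]
      congr 1
      funext x
      simp only [PiLp.sub_apply]
      ring
    have hnorm : (eLpNorm (fun x => (v : E2 → E2) x - (w : E2 → E2) x) 2 volume).toReal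
        = ‖v - w‖ := by
      rw [Lp.norm_def]
      congr 1
      refine eLpNorm_congr_ae ?_
      filter_upwards [Lp.coeFn_sub v w] with x hx
      rw [hx]
      rfl
    rw [hsplit, Real.norm_eq_abs]
    calc |_ + _| ≤ |∫ x : E2, ((v : E2 → E2) x - (w : E2 → E2) x) i * M x * (v : E2 → E2) x j|
          + |∫ x : E2, (w : E2 → E2) x i * M x * ((v : E2 → E2) x - (w : E2 → E2) x) j| :=
        abs_add_le _ _
      _ ≤ C * (‖v - w‖ * ‖v‖) + C * (‖w‖ * ‖v - w‖) := by
        refine add_le_add ?_ ?_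
        · have h := abs_integral_tri_le hvw hv hM.aestronglyMeasurable hC i j
          rwa [hnorm, ← Lp.norm_def] at h
        · have h := abs_integral_tri_le hw hvw hM.aestronglyMeasurable hC i j
          rwa [hnorm, ← Lp.norm_def] at h
  have hg : Continuous (fun v : Lp E2 2 (volume : Measure E2) =>
      C * (‖v - w‖ * ‖v‖) + C * (‖w‖ * ‖v - w‖)) := by
    have h1 : Continuous (fun v : Lp E2 2 (volume : Measure E2) => ‖v - w‖) :=
      (continuous_id.sub continuous_const).norm
    exact (continuous_const.mul (h1.mul continuous_norm)).add
      (continuous_const.mul (continuous_const.mul h1))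
  have hten : Filter.Tendsto (fun v : Lp E2 2 (volume : Measure E2) =>
      C * (‖v - w‖ * ‖v‖) + C * (‖w‖ * ‖v - w‖)) (nhds w) (nhds 0) := by
    have h2 := hg.tendsto w
    have h3 : C * (‖w - w‖ * ‖w‖) + C * (‖w‖ * ‖w - w‖) = 0 := by simp
    rwa [h3] at h2
  rw [ContinuousAt, tendsto_iff_norm_sub_tendsto_zero]
  exact squeeze_zero (fun v => norm_nonneg _) key hten

end Aux

section Struct

variable {m : ℕ} {ψ : (Fin m → ℝ) → ℝ} {e : Fin m → E2 → E2}

/-- The coefficients `∂_kψ((v,e₁),…,(v,e_m))` of `Λ'(v)`. -/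
def aco (m : ℕ) (ψ : (Fin m → ℝ) → ℝ) (e : Fin m → E2 → E2) (v : E2 → E2) : Fin m → ℝ :=
  fun k => dpsi m ψ k (fun i' => innerL2 v (e i'))

lemma LamP_eq (v : E2 → E2) : LamP m ψ e v = fun x => ∑ k, aco m ψ e v k • e k x := rfl

lemma pdv_sum_smul (c : Fin m → ℝ) (g : Fin m → E2 → E2)
    (hg : ∀ k, Differentiable ℝ (g k)) (i : Fin 2) :
    pdv i (fun x => ∑ k, c k • g k x) = fun x => ∑ k, c k • pdv i (g k) x := by
  funext x
  unfold pdv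
  rw [fderiv_fun_sum (A := fun k y => c k • g k y) (fun k _ => ((hg k) x).const_smul (c k))]
  rw [ContinuousLinearMap.sum_apply]
  congr 1
  funext k
  rw [fderiv_fun_const_smul ((hg k) x) (c k)]
  rfl

lemma pdv_LamP (he : ∀ k, ContDiff ℝ 2 (e k)) (v : E2 → E2) (i : Fin 2) :
    pdv i (LamP m ψ e v) = fun x => ∑ k, aco m ψ e v k • pdv i (e k) x := by
  rw [LamP_eq]
  exact pdv_sum_smul _ _ (fun k => (he k).differentiable (by norm_num)) i

lemma pdv_pdv_LamP (he : ∀ k, ContDiff ℝ 2 (e k)) (v : E2 → E2) (i : Fin 2) :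
    pdv i (pdv i (LamP m ψ e v)) = fun x => ∑ k, aco m ψ e v k • pdv i (pdv i (e k)) x := by
  rw [pdv_LamP he]
  exact pdv_sum_smul _ _ (fun k => (contDiff_pdv (he k) i).differentiable (by norm_num)) i

lemma continuous_dpsi (hψ : ContDiff ℝ 2 ψ) (k : Fin m) : Continuous (dpsi m ψ k) :=
  (hψ.continuous_fderiv (by norm_num)).clm_apply continuous_const

lemma continuous_d2psi (hψ : ContDiff ℝ 2 ψ) (i j : Fin m) : Continuous (d2psi m ψ i j) := by
  have h1 : ContDiff ℝ 1 (fun b => fderiv ℝ ψ b (Pi.single i 1)) :=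
    (hψ.fderiv_right (m := 1) (by norm_num)).clm_apply contDiff_const
  exact (h1.continuous_fderiv (by norm_num)).clm_apply continuous_const

/-- Expansion of `(g, Λ'(v))` as a finite linear combination. -/
lemma innerL2_LamP {v g : E2 → E2} (hg : MemLp g 2 (volume : Measure E2))
    (he2 : ∀ k, MemLp (e k) 2 (volume : Measure E2)) :
    innerL2 g (LamP m ψ e v) = ∑ k, aco m ψ e v k * innerL2 g (e k) := by
  unfold innerL2
  have hpt : ∀ x, (⟪g x, LamP m ψ e v x⟫ : ℝ) = ∑ k, aco m ψ e v k * ⟪g x, e k x⟫ := by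
    intro x
    rw [LamP_eq]
    rw [inner_sum]
    exact Finset.sum_congr rfl fun k _ => real_inner_smul_right _ _ _
  simp_rw [hpt]
  rw [integral_finset_sum _ (fun k _ => (integrable_inner2 hg (he2 k)).const_mul _)]
  refine Finset.sum_congr rfl fun k _ => ?_
  rw [integral_const_mul]

lemma E2.finset_sum_apply {ι : Type*} (s : Finset ι) (g : ι → E2) (j : Fin 2) :
    (∑ k ∈ s, g k) j = ∑ k ∈ s, g k j := by rw [WithLp.ofLp_sum, Finset.sum_apply]

lemma sum3_comm {ι κ γ : Type*} [Fintype ι] [Fintype κ] [Fintype γ] (F : ι → κ → γ → ℝ) :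
    ∑ j : ι, ∑ i : κ, ∑ k : γ, F j i k = ∑ k : γ, ∑ j : ι, ∑ i : κ, F j i k := by
  have h1 : ∀ j, ∑ i : κ, ∑ k : γ, F j i k = ∑ k : γ, ∑ i : κ, F j i k :=
    fun j => Finset.sum_comm
  simp_rw [h1]
  exact Finset.sum_comm

/-- Pointwise expansion of the Laplacian pairing integrand. -/
lemma I1_pt (he : ∀ k, ContDiff ℝ 2 (e k)) (v : E2 → E2) (x : E2) :
    (∑ j : Fin 2, v x j * ∑ i : Fin 2, pdv i (pdv i (LamP m ψ e v)) x j)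
      = ∑ k, aco m ψ e v k * (⟪v x, ∑ i : Fin 2, pdv i (pdv i (e k)) x⟫ : ℝ) := by
  have hd : ∀ i : Fin 2, pdv i (pdv i (LamP m ψ e v))
      = fun x => ∑ k, aco m ψ e v k • pdv i (pdv i (e k)) x := fun i => pdv_pdv_LamP he v i
  simp only [hd, E2.finset_sum_apply, PiLp.smul_apply, smul_eq_mul, PiLp.inner_apply,
    RCLike.inner_apply, conj_trivial]
  simp_rw [Finset.sum_mul, Finset.mul_sum]
  rw [sum3_comm (fun j i k => v x j * (aco m ψ e v k * pdv i (pdv i (e k)) x j))]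
  refine Finset.sum_congr rfl fun k _ => Finset.sum_congr rfl fun j _ =>
    Finset.sum_congr rfl fun i _ => by ring

/-- Pointwise expansion of the trilinear integrand. -/
lemma triB_pt (he : ∀ k, ContDiff ℝ 2 (e k)) (v : E2 → E2) (x : E2) :
    (∑ i : Fin 2, ∑ j : Fin 2, v x i * pdv i (LamP m ψ e v) x j * v x j)
      = ∑ k, aco m ψ e v k * ∑ i : Fin 2, ∑ j : Fin 2, v x i * pdv i (e k) x j * v x j := by
  have hd : ∀ i : Fin 2, pdv i (LamP m ψ e v)
      = fun x => ∑ k, aco m ψ e v k • pdv i (e k) x := fun i => pdv_LamP he v i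
  simp only [hd, E2.finset_sum_apply, PiLp.smul_apply, smul_eq_mul]
  simp_rw [Finset.mul_sum]
  simp_rw [Finset.sum_mul]
  rw [sum3_comm (fun i j k => v x i * (aco m ψ e v k * pdv i (e k) x j) * v x j)]
  refine Finset.sum_congr rfl fun k _ => Finset.sum_congr rfl fun i _ =>
    Finset.sum_congr rfl fun j _ => by ring

end Struct

section MoreAux

lemma continuous_coord {g : E2 → E2} (hg : Continuous g) (j : Fin 2) :
    Continuous fun x => g x j := by
  have h : (fun x => g x j) = fun x => ⟪g x, EuclideanSpace.single j (1:ℝ)⟫ := by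
    funext x; simp [PiLp.inner_apply, EuclideanSpace.single_apply]
  rw [h]; exact hg.inner continuous_const

lemma hcs_coord {g : E2 → E2} (hg : HasCompactSupport g) (j : Fin 2) :
    HasCompactSupport fun x => g x j :=
  hg.comp_left (g := fun y : E2 => y j) rfl

end MoreAux

/-- Lemma 4.11: for `Λ ∈ 𝒥` (cylindrical test functionals built from `ψ ∈ C²_c(ℝ^m)` and
divergence-free `e₁,…,e_m ∈ C²_c(ℝ²;ℝ²)`) and `f ∈ L²(ℝ²;ℝ²)`, the maps
`G₁(v) = ⟨L(v,t), Λ'(v)⟩`, `G₂(v) = σ(v, Λ'(v))` and `G₃(v) = Λ''(v)(σv)(σv)` are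
well-defined (all defining integrals converge) and continuous on `L²(ℝ²;ℝ²)`. -/
theorem G_maps_well_defined_and_continuous
    (ν σ : ℝ) (hν : 0 < ν) (hσ : 0 < σ) (m : ℕ)
    (ψ : (Fin m → ℝ) → ℝ) (hψ : ContDiff ℝ 2 ψ) (hψc : HasCompactSupport ψ)
    (e : Fin m → E2 → E2)
    (he : ∀ i, ContDiff ℝ 2 (e i)) (hec : ∀ i, HasCompactSupport (e i))
    (hediv : ∀ i, DivFree (e i))
    (f : E2 → E2) (hf : MemLp f 2 (volume : Measure E2)) :
    (∀ v : Lp E2 2 (volume : Measure E2), ∀ i : Fin m,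
        Integrable (fun x : E2 => ⟪(v : E2 → E2) x, e i x⟫) volume) ∧
    (∀ v : Lp E2 2 (volume : Measure E2),
        Integrable (fun x : E2 =>
          ∑ j : Fin 2, (v : E2 → E2) x j *
            ∑ i : Fin 2, pdv i (pdv i (LamP m ψ e (v : E2 → E2))) x j) volume) ∧
    (∀ v : Lp E2 2 (volume : Measure E2),
        Integrable (fun x : E2 =>
          ∑ i : Fin 2, ∑ j : Fin 2, (v : E2 → E2) x i *
            pdv i (LamP m ψ e (v : E2 → E2)) x j * (v : E2 → E2) x j) volume) ∧
    (∀ v : Lp E2 2 (volume : Measure E2),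
        Integrable (fun x : E2 => ⟪f x, LamP m ψ e (v : E2 → E2) x⟫) volume) ∧
    (∀ v : Lp E2 2 (volume : Measure E2),
        Integrable (fun x : E2 => ⟪(v : E2 → E2) x, LamP m ψ e (v : E2 → E2) x⟫) volume) ∧
    Continuous (fun v : Lp E2 2 (volume : Measure E2) => G1 ν m ψ e f (v : E2 → E2)) ∧
    Continuous (fun v : Lp E2 2 (volume : Measure E2) => G2 σ m ψ e (v : E2 → E2)) ∧
    Continuous (fun v : Lp E2 2 (volume : Measure E2) => G3 σ m ψ e (v : E2 → E2)) := by
  -- basic regularity facts about the test fields and their derivatives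
  have he1 : ∀ k, ContDiff ℝ 1 (e k) := fun k => (he k).of_le one_le_two
  have he2 : ∀ k, MemLp (e k) 2 (volume : Measure E2) :=
    fun k => ((he k).continuous).memLp_of_hasCompactSupport (hec k)
  have hDc : ∀ (i : Fin 2) (k : Fin m), Continuous (pdv i (e k)) :=
    fun i k => continuous_pdv (he1 k) i
  have hDcs : ∀ (i : Fin 2) (k : Fin m), HasCompactSupport (pdv i (e k)) :=
    fun i k => hcs_pdv (hec k) i
  have hDDc : ∀ (i : Fin 2) (k : Fin m), Continuous (pdv i (pdv i (e k))) :=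
    fun i k => continuous_pdv (contDiff_pdv (he k) i) i
  have hDDcs : ∀ (i : Fin 2) (k : Fin m), HasCompactSupport (pdv i (pdv i (e k))) :=
    fun i k => hcs_pdv (hDcs i k) i
  have hDD2 : ∀ k, MemLp (fun x => ∑ i : Fin 2, pdv i (pdv i (e k)) x) 2 (volume : Measure E2) :=
    fun k => memLp_finset_sum _ fun i _ =>
      (hDDc i k).memLp_of_hasCompactSupport (hDDcs i k)
  -- coordinate components of the first derivatives, with their bounds
  have hMc : ∀ (k : Fin m) (i j : Fin 2), Continuous fun x => pdv i (e k) x j :=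
    fun k i j => continuous_coord (hDc i k) j
  have hMcs : ∀ (k : Fin m) (i j : Fin 2), HasCompactSupport fun x => pdv i (e k) x j :=
    fun k i j => hcs_coord (hDcs i k) j
  -- integrability of each trilinear piece
  have hTriInt : ∀ (v w : Lp E2 2 (volume : Measure E2)) (k : Fin m) (i j : Fin 2),
      Integrable (fun x : E2 => (v : E2 → E2) x i * pdv i (e k) x j * (w : E2 → E2) x j)
        volume := by
    intro v w k i j
    obtain ⟨C, hC0, hC⟩ := exists_bound (hMc k i j) (hMcs k i j)
    exact integrable_tri (Lp.memLp v) (Lp.memLp w) (hMc k i j).aestronglyMeasurable hC i j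
  -- the five integrability claims
  have part1 : ∀ v : Lp E2 2 (volume : Measure E2), ∀ i : Fin m,
      Integrable (fun x : E2 => ⟪(v : E2 → E2) x, e i x⟫) volume :=
    fun v i => integrable_inner2 (Lp.memLp v) (he2 i)
  have part2 : ∀ v : Lp E2 2 (volume : Measure E2),
      Integrable (fun x : E2 =>
        ∑ j : Fin 2, (v : E2 → E2) x j *
          ∑ i : Fin 2, pdv i (pdv i (LamP m ψ e (v : E2 → E2))) x j) volume := by
    intro v
    have heq : (fun x : E2 => ∑ j : Fin 2, (v : E2 → E2) x j *
          ∑ i : Fin 2, pdv i (pdv i (LamP m ψ e (v : E2 → E2))) x j)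
        = fun x => ∑ k, aco m ψ e (v : E2 → E2) k *
            (⟪(v : E2 → E2) x, ∑ i : Fin 2, pdv i (pdv i (e k)) x⟫ : ℝ) :=
      funext (I1_pt he _)
    rw [heq]
    exact integrable_finset_sum _ fun k _ =>
      (integrable_inner2 (Lp.memLp v) (hDD2 k)).const_mul _
  have part3 : ∀ v : Lp E2 2 (volume : Measure E2),
      Integrable (fun x : E2 =>
        ∑ i : Fin 2, ∑ j : Fin 2, (v : E2 → E2) x i *
          pdv i (LamP m ψ e (v : E2 → E2)) x j * (v : E2 → E2) x j) volume := by
    intro v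
    have heq : (fun x : E2 => ∑ i : Fin 2, ∑ j : Fin 2, (v : E2 → E2) x i *
          pdv i (LamP m ψ e (v : E2 → E2)) x j * (v : E2 → E2) x j)
        = fun x => ∑ k, aco m ψ e (v : E2 → E2) k *
            ∑ i : Fin 2, ∑ j : Fin 2, (v : E2 → E2) x i * pdv i (e k) x j * (v : E2 → E2) x j :=
      funext (triB_pt he _)
    rw [heq]
    refine integrable_finset_sum _ fun k _ => Integrable.const_mul ?_ _
    exact integrable_finset_sum _ fun i _ => integrable_finset_sum _ fun j _ =>
      hTriInt v v k i j
  have part4 : ∀ v : Lp E2 2 (volume : Measure E2),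
      Integrable (fun x : E2 => ⟪f x, LamP m ψ e (v : E2 → E2) x⟫) volume := by
    intro v
    have heq : (fun x : E2 => (⟪f x, LamP m ψ e (v : E2 → E2) x⟫ : ℝ))
        = fun x => ∑ k, aco m ψ e (v : E2 → E2) k * ⟪f x, e k x⟫ := by
      funext x
      rw [LamP_eq, inner_sum]
      exact Finset.sum_congr rfl fun k _ => real_inner_smul_right _ _ _
    rw [heq]
    exact integrable_finset_sum _ fun k _ => (integrable_inner2 hf (he2 k)).const_mul _
  have part5 : ∀ v : Lp E2 2 (volume : Measure E2),
      Integrable (fun x : E2 => ⟪(v : E2 → E2) x, LamP m ψ e (v : E2 → E2) x⟫) volume := by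
    intro v
    have heq : (fun x : E2 => (⟪(v : E2 → E2) x, LamP m ψ e (v : E2 → E2) x⟫ : ℝ))
        = fun x => ∑ k, aco m ψ e (v : E2 → E2) k * ⟪(v : E2 → E2) x, e k x⟫ := by
      funext x
      rw [LamP_eq, inner_sum]
      exact Finset.sum_congr rfl fun k _ => real_inner_smul_right _ _ _
    rw [heq]
    exact integrable_finset_sum _ fun k _ =>
      (integrable_inner2 (Lp.memLp v) (he2 k)).const_mul _
  -- continuity of the basic building blocks
  have hcm : ∀ (g : E2 → E2), MemLp g 2 (volume : Measure E2) →
      Continuous fun v : Lp E2 2 (volume : Measure E2) => innerL2 (v : E2 → E2) g := by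
    intro g hg
    have heq : (fun v : Lp E2 2 (volume : Measure E2) => innerL2 (v : E2 → E2) g)
        = fun v : Lp E2 2 (volume : Measure E2) => (⟪v, hg.toLp g⟫ : ℝ) := by
      funext v
      rw [innerL2, integral_inner2 (Lp.memLp v) hg]
      congr 1
      exact Lp.toLp_coeFn v (Lp.memLp v)
    rw [heq]
    exact continuous_id.inner continuous_const
  have hAco : ∀ k : Fin m,
      Continuous fun v : Lp E2 2 (volume : Measure E2) => aco m ψ e (v : E2 → E2) k := by
    intro k
    exact (continuous_dpsi hψ k).comp (continuous_pi fun i' => hcm (e i') (he2 i'))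
  -- continuity of G2
  have hG2 : Continuous (fun v : Lp E2 2 (volume : Measure E2) =>
      G2 σ m ψ e (v : E2 → E2)) := by
    have heq : (fun v : Lp E2 2 (volume : Measure E2) => G2 σ m ψ e (v : E2 → E2))
        = fun v : Lp E2 2 (volume : Measure E2) =>
            σ * ∑ k, aco m ψ e (v : E2 → E2) k * innerL2 (v : E2 → E2) (e k) := by
      funext v
      rw [G2, innerL2_LamP (Lp.memLp v) he2]
    rw [heq]
    exact continuous_const.mul (continuous_finset_sum _ fun k _ =>
      (hAco k).mul (hcm (e k) (he2 k)))
  -- continuity of G3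
  have hG3 : Continuous (fun v : Lp E2 2 (volume : Measure E2) =>
      G3 σ m ψ e (v : E2 → E2)) := by
    simp only [G3]
    refine continuous_const.mul (continuous_finset_sum _ fun i _ =>
      continuous_finset_sum _ fun j _ => ?_)
    refine Continuous.mul (Continuous.mul ?_ (hcm (e i) (he2 i))) (hcm (e j) (he2 j))
    exact (continuous_d2psi hψ i j).comp (continuous_pi fun i' => hcm (e i') (he2 i'))
  -- continuity of G1
  have hG1 : Continuous (fun v : Lp E2 2 (volume : Measure E2) =>
      G1 ν m ψ e f (v : E2 → E2)) := by
    have heq : (fun v : Lp E2 2 (volume : Measure E2) => G1 ν m ψ e f (v : E2 → E2))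
        = fun v : Lp E2 2 (volume : Measure E2) =>
          ν * (∑ k, aco m ψ e (v : E2 → E2) k *
              innerL2 (v : E2 → E2) (fun x => ∑ i : Fin 2, pdv i (pdv i (e k)) x))
          + (∑ k, aco m ψ e (v : E2 → E2) k *
              ∑ i : Fin 2, ∑ j : Fin 2,
                ∫ x : E2, (v : E2 → E2) x i * pdv i (e k) x j * (v : E2 → E2) x j)
          + ∑ k, aco m ψ e (v : E2 → E2) k * innerL2 f (e k) := by
      funext v
      have hv := Lp.memLp v
      have h1 : (∫ x : E2, ∑ j : Fin 2, (v : E2 → E2) x j *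
            ∑ i : Fin 2, pdv i (pdv i (LamP m ψ e (v : E2 → E2))) x j)
          = ∑ k, aco m ψ e (v : E2 → E2) k *
              innerL2 (v : E2 → E2) (fun x => ∑ i : Fin 2, pdv i (pdv i (e k)) x) := by
        simp_rw [I1_pt he ((v : E2 → E2))]
        rw [integral_finset_sum _ fun k _ => (integrable_inner2 hv (hDD2 k)).const_mul _]
        exact Finset.sum_congr rfl fun k _ => integral_const_mul _ _
      have h2 : triB (v : E2 → E2) (LamP m ψ e (v : E2 → E2)) (v : E2 → E2)
          = ∑ k, aco m ψ e (v : E2 → E2) k *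
              ∑ i : Fin 2, ∑ j : Fin 2,
                ∫ x : E2, (v : E2 → E2) x i * pdv i (e k) x j * (v : E2 → E2) x j := by
        rw [triB]
        simp_rw [triB_pt he ((v : E2 → E2))]
        rw [integral_finset_sum _ fun k _ => Integrable.const_mul
          (integrable_finset_sum _ fun i _ => integrable_finset_sum _ fun j _ =>
            hTriInt v v k i j) _]
        refine Finset.sum_congr rfl fun k _ => ?_
        rw [integral_const_mul]
        congr 1
        rw [integral_finset_sum _ fun i _ => integrable_finset_sum _ fun j _ =>
          hTriInt v v k i j]
        refine Finset.sum_congr rfl fun i _ => ?_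
        rw [integral_finset_sum _ fun j _ => hTriInt v v k i j]
      have h3 : innerL2 f (LamP m ψ e (v : E2 → E2))
          = ∑ k, aco m ψ e (v : E2 → E2) k * innerL2 f (e k) := innerL2_LamP hf he2
      rw [G1, h1, h2, h3]
    rw [heq]
    refine Continuous.add (Continuous.add ?_ ?_) ?_
    · exact continuous_const.mul (continuous_finset_sum _ fun k _ =>
        (hAco k).mul (hcm _ (hDD2 k)))
    · refine continuous_finset_sum _ fun k _ => (hAco k).mul ?_
      refine continuous_finset_sum _ fun i _ => continuous_finset_sum _ fun j _ => ?_
      exact cont_quad (hMc k i j) (hMcs k i j) i j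
    · exact continuous_finset_sum _ fun k _ => (hAco k).mul continuous_const
  exact ⟨part1, part2, part3, part4, part5, hG1, hG2, hG3⟩
end
end
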